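/- arXiv:1111.4405 — 4 statements merged into one kernel-verified Lean document; each statement's English description precedes it below -/
import Mathlib

section
/- Let q > 1 be a real number, r ≥ 1 an integer, c_1,…,c_r nonzero real numbers, and (a_1,b_1),…,(a_r,b_r) pairwise distinct pairs of integers with a_i ≥ 0. Then the function h : ℕ → ℝ given by h(x) = Σ_{i=1}^r c_i x^{a_i} q^{b_i x} is not identically zero on ℕ. -/
open Filter Finset Topology

/-- The function `h(x) = ∑_i c_i x^{a_i} q^{b_i x}` with nonzero `c_i` and pairwise
distinct pairs `(a_i, b_i)` is not identically zero on `ℕ`. -/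
theorem sum_powexp_not_identically_zero (q : ℝ) (hq : 1 < q) (r : ℕ) (hr : 1 ≤ r)
    (c : Fin r → ℝ) (hc : ∀ i, c i ≠ 0) (a : Fin r → ℕ) (b : Fin r → ℤ)
    (hab : Function.Injective fun i => (a i, b i)) :
    ¬ ∀ x : ℕ, ∑ i, c i * (x : ℝ) ^ (a i) * q ^ (b i * (x : ℤ)) = 0 := by
  intro H
  have hq0 : (0:ℝ) < q := lt_trans one_pos hq
  -- pick the lexicographically dominant index
  have hne : (Finset.univ : Finset (Fin r)).Nonempty := by
    refine univ_nonempty_iff.mpr ?_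
    exact Fin.pos_iff_nonempty.mp hr
  obtain ⟨i₀, -, hmax⟩ := Finset.exists_max_image Finset.univ
    (fun i => toLex ((b i, a i) : ℤ ×ₗ ℕ)) hne
  set A : ℤ := (a i₀ : ℤ) with hA
  set B : ℤ := b i₀ with hB
  -- helper: structure of non-dominant indices
  have hdom : ∀ i, i ≠ i₀ → b i < B ∨ (b i = B ∧ (a i : ℤ) < A) := by
    intro i hi
    have h := hmax i (mem_univ i)
    rw [Prod.Lex.le_iff] at h
    rcases h with h | ⟨h1, h2⟩
    · exact Or.inl h
    · refine Or.inr ⟨h1, ?_⟩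
      have h1' : b i = b i₀ := h1
      have h2' : a i ≤ a i₀ := h2
      have hne' : a i ≠ a i₀ := by
        intro he
        exact hi (hab (by simp [he, h1']))
      rw [hA]
      exact_mod_cast lt_of_le_of_ne h2' hne'
  -- the rescaled function
  set g : Fin r → ℕ → ℝ := fun i x =>
    c i * (x : ℝ) ^ ((a i : ℤ) - A) * q ^ ((b i - B) * (x : ℤ)) with hg
  -- each summand tends to its limit
  have hlim : ∀ i, Tendsto (g i) atTop (𝓝 (if i = i₀ then c i₀ else 0)) := by
    intro i
    by_cases hi : i = i₀
    · subst hi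
      simp only [hg, hA, hB, if_true, sub_self, zpow_zero, zero_mul, mul_one, if_pos rfl]
      exact tendsto_const_nhds
    rw [if_neg hi]
    rcases hdom i hi with hlt | ⟨heq, halt⟩
    · -- b i < B : squeeze with |c i| * x^(a i) * t^x, t = q^(b i - B) < 1
      set t : ℝ := q ^ (b i - B) with ht
      have ht0 : 0 < t := zpow_pos hq0 _
      have ht1 : t < 1 := zpow_lt_one_of_neg₀ hq (by omega)
      have hmain : Tendsto (fun x : ℕ => |c i| * ((x:ℝ) ^ (a i) * t ^ x))
          atTop (𝓝 0) := by
        have := tendsto_pow_const_mul_const_pow_of_abs_lt_one (a i)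
          (r := t) (by rw [abs_of_pos ht0]; exact ht1)
        simpa using this.const_mul |c i|
      refine squeeze_zero_norm' ?_ hmain
      filter_upwards [eventually_ge_atTop 1] with x hx
      have hx1 : (1:ℝ) ≤ (x:ℝ) := by exact_mod_cast hx
      have hx0 : (x:ℝ) ≠ 0 := by positivity
      have hzp : (x:ℝ) ^ ((a i : ℤ) - A) ≤ (x:ℝ) ^ (a i : ℤ) := by
        apply zpow_le_zpow_right₀ hx1
        have : (0:ℤ) ≤ A := Int.ofNat_nonneg _
        omega
      have hzp0 : (0:ℝ) ≤ (x:ℝ) ^ ((a i : ℤ) - A) := le_of_lt (zpow_pos (by linarith) _)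
      have hqx : q ^ ((b i - B) * (x:ℤ)) = t ^ x := by
        rw [ht, ← zpow_natCast (q ^ (b i - B)), ← zpow_mul]
      calc ‖g i x‖ = |c i| * ((x:ℝ) ^ ((a i : ℤ) - A) * t ^ x) := by
            rw [hg]; simp only [Real.norm_eq_abs, hqx, mul_assoc, abs_mul]
            congr 1
            rw [abs_of_nonneg hzp0, abs_of_nonneg (le_of_lt (pow_pos ht0 x))]
        _ ≤ |c i| * ((x:ℝ) ^ (a i) * t ^ x) := by
            apply mul_le_mul_of_nonneg_left _ (abs_nonneg _)
            apply mul_le_mul_of_nonneg_right _ (le_of_lt (pow_pos ht0 x))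
            rw [← zpow_natCast (x:ℝ) (a i)]; exact hzp
    · -- b i = B, a i < A : c i * x^(neg) → 0
      have : Tendsto (fun x : ℕ => c i * (x:ℝ) ^ ((a i : ℤ) - A)) atTop (𝓝 0) := by
        have h1 : Tendsto (fun y : ℝ => y ^ ((a i : ℤ) - A)) atTop (𝓝 0) :=
          tendsto_zpow_atTop_zero (by omega)
        have := (h1.comp tendsto_natCast_atTop_atTop).const_mul (c i)
        simpa using this
      refine this.congr (fun x => ?_)
      simp [hg, heq]
  -- the sum of limits is c i₀
  have hsum : Tendsto (fun x : ℕ => ∑ i, g i x) atTop (𝓝 (c i₀)) := by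
    have := tendsto_finset_sum Finset.univ (fun i _ => hlim i)
    simpa using this
  -- but the sum is eventually 0
  have hzero : ∀ᶠ x : ℕ in atTop, ∑ i, g i x = 0 := by
    filter_upwards [eventually_ge_atTop 1] with x hx
    have hx0 : (x:ℝ) ≠ 0 := by positivity
    have : ∑ i, g i x
        = (∑ i, c i * (x : ℝ) ^ (a i) * q ^ (b i * (x : ℤ)))
          * ((x:ℝ) ^ (-A) * q ^ (-B * (x:ℤ))) := by
      rw [Finset.sum_mul]
      apply Finset.sum_congr rfl
      intro i _
      simp only [hg]
      have h1 : (x:ℝ) ^ ((a i : ℤ) - A) = (x:ℝ) ^ (a i) * (x:ℝ) ^ (-A) := by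
        rw [sub_eq_add_neg, zpow_add₀ hx0, zpow_natCast]
      have h2 : q ^ ((b i - B) * (x:ℤ)) = q ^ (b i * (x:ℤ)) * q ^ (-B * (x:ℤ)) := by
        rw [← zpow_add₀ (ne_of_gt hq0)]; ring_nf
      rw [h1, h2]; ring
    rw [this, H x, zero_mul]
  have heq0 : (fun x : ℕ => ∑ i, g i x) =ᶠ[atTop] fun _ => (0:ℝ) := hzero
  have : c i₀ = 0 := tendsto_nhds_unique (Filter.Tendsto.congr' heq0 hsum) tendsto_const_nhds
  exact hc i₀ this
end

section
/- Let q > 1 be a real number, r ≥ 1, c_1,…,c_r nonzero real numbers, a_1,…,a_r nonnegative integers, b_1,…,b_r integers, with the pairs (a_i,b_i) pairwise distinct. Then the function h(x) = Σ_{i=1}^r c_i x^{a_i} q^{b_i x} is bounded on ℕ if and only if for every i one has b_i ≤ 0, and moreover a_i = 0 whenever b_i = 0. -/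
open Filter Finset

lemma aux_decay (q : ℝ) (hq : 1 < q) (a : ℕ) (b : ℤ) (hb : b ≤ -1) :
    Tendsto (fun x : ℕ => (x:ℝ) ^ a * q ^ (b * (x:ℤ))) atTop (nhds 0) := by
  have hq0 : (0:ℝ) < q := lt_trans one_pos hq
  apply squeeze_zero' (g := fun x : ℕ => (x:ℝ) ^ a / q ^ x)
  · filter_upwards with x
    positivity
  · filter_upwards with x
    have h1 : q ^ (b * (x:ℤ)) ≤ q ^ (-(x:ℤ)) := by
      apply zpow_le_zpow_right₀ hq.le
      nlinarith [Int.natCast_nonneg x]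
    have h2 : q ^ (-(x:ℤ)) = (q ^ x)⁻¹ := by
      rw [zpow_neg, zpow_natCast]
    calc (x:ℝ) ^ a * q ^ (b * (x:ℤ)) ≤ (x:ℝ) ^ a * (q ^ x)⁻¹ := by
          rw [← h2]; exact mul_le_mul_of_nonneg_left h1 (by positivity)
      _ = (x:ℝ) ^ a / q ^ x := by rw [div_eq_mul_inv]
  · exact tendsto_pow_const_div_const_pow_of_one_lt a hq

lemma aux_ratio (q : ℝ) (hq : 0 < q) (c : ℝ) (ai A : ℕ) (bi B : ℤ) {x : ℕ} (hx : 1 ≤ x) :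
    c * (x:ℝ) ^ ai * q ^ (bi * (x:ℤ)) / ((x:ℝ) ^ A * q ^ (B * (x:ℤ)))
      = c * ((x:ℝ) ^ ai / (x:ℝ) ^ A) * q ^ ((bi - B) * (x:ℤ)) := by
  have hx0 : (0:ℝ) < x := by exact_mod_cast hx
  have hq0 : q ≠ 0 := ne_of_gt hq
  rw [sub_mul, zpow_sub₀ hq0]
  field_simp

/-- `h(x) = ∑_i c_i x^{a_i} q^{b_i x}` is bounded on `ℕ` iff all `b_i ≤ 0` and
`a_i = 0` whenever `b_i = 0`. -/
theorem sum_powexp_bounded_iff (q : ℝ) (hq : 1 < q) (r : ℕ) (hr : 1 ≤ r)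
    (c : Fin r → ℝ) (hc : ∀ i, c i ≠ 0) (a : Fin r → ℕ) (b : Fin r → ℤ)
    (hab : Function.Injective fun i => (a i, b i)) :
    (∃ M : ℝ, ∀ x : ℕ, |∑ i, c i * (x : ℝ) ^ (a i) * q ^ (b i * (x : ℤ))| ≤ M) ↔
      ∀ i, b i ≤ 0 ∧ (b i = 0 → a i = 0) := by
  have hq0 : (0:ℝ) < q := lt_trans one_pos hq
  constructor
  · rintro ⟨M, hM⟩ i
    by_contra hcon
    push_neg at hcon
    have hkey : 0 < b i ∨ (b i = 0 ∧ a i ≠ 0) := by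
      rcases lt_or_ge 0 (b i) with h | h
      · exact Or.inl h
      · exact Or.inr (hcon h)
    -- pick lex-maximal j
    obtain ⟨j, -, hj⟩ := Finset.exists_max_image Finset.univ
      (fun i => toLex (b i, a i)) ⟨i, Finset.mem_univ i⟩
    have hj' : ∀ i', b i' < b j ∨ (b i' = b j ∧ a i' ≤ a j) := by
      intro i'
      have := hj i' (Finset.mem_univ i')
      rwa [Prod.Lex.le_iff] at this
    set B := b j with hB
    set A := a j with hA
    have hBA : 0 < B ∨ (B = 0 ∧ A ≠ 0) := by
      rcases hj' i with h | ⟨h1, h2⟩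
      · rcases hkey with hk | ⟨hk, -⟩
        · exact Or.inl (lt_trans hk h)
        · exact Or.inl (by omega)
      · rcases hkey with hk | ⟨hk, hk2⟩
        · exact Or.inl (h1 ▸ hk)
        · refine Or.inr ⟨by omega, ?_⟩
          intro hA0
          exact hk2 (by omega)
    set g : ℕ → ℝ := fun x => (x:ℝ) ^ A * q ^ (B * (x:ℤ)) with hg_def
    have hg_pos : ∀ x : ℕ, 1 ≤ x → 0 < g x := by
      intro x hx
      have hx0 : (0:ℝ) < x := by exact_mod_cast hx
      positivity
    have hg : Tendsto g atTop atTop := by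
      rcases hBA with hB1 | ⟨hB0, hA0⟩
      · refine tendsto_atTop_mono' atTop ?_ (tendsto_pow_atTop_atTop_of_one_lt hq)
        filter_upwards [eventually_ge_atTop 1] with x hx
        have hx1 : (1:ℝ) ≤ (x:ℝ) := by exact_mod_cast hx
        have h1 : (1:ℝ) ≤ (x:ℝ) ^ A := one_le_pow₀ hx1
        have h2 : q ^ ((x:ℤ)) ≤ q ^ (B * (x:ℤ)) := by
          apply zpow_le_zpow_right₀ hq.le
          nlinarith [Int.natCast_nonneg x]
        have h3 : 0 < q ^ (B * (x:ℤ)) := zpow_pos hq0 _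
        calc q ^ x = q ^ ((x:ℤ)) := (zpow_natCast q x).symm
          _ ≤ q ^ (B * (x:ℤ)) := h2
          _ = 1 * q ^ (B * (x:ℤ)) := (one_mul _).symm
          _ ≤ (x:ℝ) ^ A * q ^ (B * (x:ℤ)) := by gcongr
      · refine tendsto_atTop_mono' atTop ?_ tendsto_natCast_atTop_atTop
        filter_upwards [eventually_ge_atTop 1] with x hx
        have hx1 : (1:ℝ) ≤ (x:ℝ) := by exact_mod_cast hx
        have : (x:ℝ) ≤ (x:ℝ) ^ A := le_self_pow₀ (by linarith) hA0
        simp only [hg_def, hB0, zero_mul, zpow_zero, mul_one]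
        exact this
    -- per-term limit
    have hterm : ∀ i', Tendsto
        (fun x : ℕ => c i' * (x:ℝ) ^ (a i') * q ^ (b i' * (x:ℤ)) / g x)
        atTop (nhds (if i' = j then c j else 0)) := by
      intro i'
      rcases eq_or_ne i' j with rfl | hne
      · simp only [if_pos rfl, if_true]
        apply Tendsto.congr' _ tendsto_const_nhds
        filter_upwards [eventually_ge_atTop 1] with x hx
        have := hg_pos x hx
        field_simp [hg_def]
        ring
      · simp only [if_neg hne]
        have hlex := hj' i'
        rcases hlex with hlt | ⟨heq, hle⟩
        · -- b i' < B : exponential decay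
          have hb1 : b i' - B ≤ -1 := by omega
          apply squeeze_zero_norm' (a := fun x : ℕ => |c i'| * ((x:ℝ) ^ (a i') * q ^ ((b i' - B) * (x:ℤ))))
          · filter_upwards [eventually_ge_atTop 1] with x hx
            have hx1 : (1:ℝ) ≤ (x:ℝ) := by exact_mod_cast hx
            rw [aux_ratio q hq0 _ _ _ _ _ hx]
            have hQ : 0 < q ^ ((b i' - B) * (x:ℤ)) := zpow_pos hq0 _
            have h3 : (x:ℝ) ^ (a i') / (x:ℝ) ^ A ≤ (x:ℝ) ^ (a i') :=
              div_le_self (by positivity) (one_le_pow₀ hx1)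
            have h4 : |c i' * ((x:ℝ) ^ (a i') / (x:ℝ) ^ A) * q ^ ((b i' - B) * (x:ℤ))|
                = |c i'| * ((x:ℝ) ^ (a i') / (x:ℝ) ^ A) * q ^ ((b i' - B) * (x:ℤ)) := by
              rw [abs_mul, abs_mul, abs_of_pos hQ, abs_of_nonneg (show (0:ℝ) ≤ (x:ℝ) ^ (a i') / (x:ℝ) ^ A by positivity)]
            rw [Real.norm_eq_abs, h4]
            calc |c i'| * ((x:ℝ) ^ (a i') / (x:ℝ) ^ A) * q ^ ((b i' - B) * (x:ℤ))
                ≤ |c i'| * (x:ℝ) ^ (a i') * q ^ ((b i' - B) * (x:ℤ)) := by gcongr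
              _ = |c i'| * ((x:ℝ) ^ (a i') * q ^ ((b i' - B) * (x:ℤ))) := by ring
          · have := (aux_decay q hq (a i') (b i' - B) hb1).const_mul |c i'|
            simpa using this
        · -- b i' = B, a i' < A
          have haA : a i' < A := by
            rcases lt_or_eq_of_le hle with h | h
            · exact h
            · exfalso; exact hne (hab (by simp [Prod.ext_iff, h, heq, hA, hB]))
          apply Tendsto.congr' (f₁ := fun x : ℕ => c i' * ((x:ℝ) ^ (a i') / (x:ℝ) ^ A))
          · filter_upwards [eventually_ge_atTop 1] with x hx
            rw [aux_ratio q hq0 _ _ _ _ _ hx, heq, sub_self, zero_mul, zpow_zero, mul_one]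
          · have h0 := (tendsto_pow_div_pow_atTop_zero (𝕜 := ℝ) haA).comp tendsto_natCast_atTop_atTop
            have := h0.const_mul (c i')
            simpa using this
    have hratio : Tendsto
        (fun x : ℕ => (∑ i', c i' * (x:ℝ) ^ (a i') * q ^ (b i' * (x:ℤ))) / g x)
        atTop (nhds (c j)) := by
      have hsum := tendsto_finset_sum Finset.univ (fun i' _ => hterm i')
      have heq : (∑ i', if i' = j then c j else 0) = c j := by simp
      rw [heq] at hsum
      apply hsum.congr'
      filter_upwards with x
      rw [Finset.sum_div]
    have habs : Tendsto
        (fun x : ℕ => |∑ i', c i' * (x:ℝ) ^ (a i') * q ^ (b i' * (x:ℤ))|) atTop atTop := by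
      have h1 : Tendsto
          (fun x : ℕ => |(∑ i', c i' * (x:ℝ) ^ (a i') * q ^ (b i' * (x:ℤ))) / g x| * g x)
          atTop atTop :=
        Tendsto.pos_mul_atTop (abs_pos.mpr (hc j)) hratio.abs hg
      apply h1.congr'
      filter_upwards [eventually_ge_atTop 1] with x hx
      have hgx := hg_pos x hx
      rw [abs_div, abs_of_pos hgx, div_mul_cancel₀ _ (ne_of_gt hgx)]
    obtain ⟨x, hx⟩ := (habs.eventually (eventually_gt_atTop M)).exists
    exact absurd (hM x) (not_le.mpr hx)
  · intro h
    set L : ℝ := ∑ i, if b i = 0 then c i else 0 with hL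
    have htend : Tendsto (fun x : ℕ => ∑ i, c i * (x:ℝ) ^ (a i) * q ^ (b i * (x:ℤ)))
        atTop (nhds L) := by
      apply tendsto_finset_sum
      intro i _
      rcases eq_or_lt_of_le (h i).1 with hb0 | hbneg
      · rw [if_pos hb0]
        have ha0 : a i = 0 := (h i).2 hb0
        apply Tendsto.congr' _ tendsto_const_nhds
        filter_upwards with x
        simp [hb0, ha0]
      · rw [if_neg (by omega)]
        have hb1 : b i ≤ -1 := by omega
        have := (aux_decay q hq (a i) (b i) hb1).const_mul (c i)
        simp only [mul_zero] at this
        apply this.congr'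
        filter_upwards with x
        ring
    obtain ⟨M, hM⟩ := htend.abs.bddAbove_range
    refine ⟨M, fun x => ?_⟩
    exact hM ⟨x, rfl⟩
end

section
/- Let q > 1 be a real number and let m ≥ 1, r ≥ 1 be integers. Suppose c_1,…,c_r are nonzero real numbers, a_{ij} are nonnegative integers and b_{ij} are integers (1 ≤ i ≤ r, 1 ≤ j ≤ m), and the tuples (a_{i1},…,a_{im},b_{i1},…,b_{im}) are pairwise distinct. If the function h : ℕ^m → ℝ, h(x) = Σ_{i=1}^r c_i q^{b_{i1}x_1+⋯+b_{im}x_m} Π_{j=1}^m x_j^{a_{ij}}, is absolutely summable over ℕ^m, then b_{ij} ≤ −1 for all i, j. -/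
open Filter Finset

-- key ratio limit
lemma keyRatio {q : ℝ} (hq : 1 < q) {B1 B : ℤ} {A1 A : ℕ}
    (h : B1 < B ∨ (B1 = B ∧ A1 < A)) (s : ℝ) :
    Tendsto (fun n : ℕ => s * q ^ (B1 * n) * (n : ℝ) ^ A1 / (q ^ (B * n) * (n : ℝ) ^ A))
      atTop (nhds 0) := by
  have hq0 : (0:ℝ) < q := lt_trans one_pos hq
  rcases h with h | ⟨rfl, h⟩
  · set r : ℝ := q ^ (B1 - B) with hr
    have hr0 : 0 < r := zpow_pos hq0 _
    have hr1 : r < 1 := zpow_lt_one_of_neg₀ hq (by omega)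
    have hlim : Tendsto (fun n : ℕ => |s| * ((n:ℝ) ^ A1 * r ^ n)) atTop (nhds 0) := by
      simpa using (tendsto_pow_const_mul_const_pow_of_lt_one A1 hr0.le hr1).const_mul |s|
    refine squeeze_zero_norm' ?_ hlim
    filter_upwards [eventually_ge_atTop 1] with n hn
    have hn1 : (1:ℝ) ≤ (n:ℝ) := by exact_mod_cast hn
    have hn0 : (0:ℝ) < (n:ℝ) := lt_of_lt_of_le one_pos hn1
    have hz : q ^ (B1 * n) / q ^ (B * n) = r ^ n := by
      rw [← zpow_sub₀ (ne_of_gt hq0), hr, ← zpow_natCast (q ^ (B1 - B)), ← zpow_mul]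
      ring_nf
    have hpos1 : (0:ℝ) < q ^ (B * n) := zpow_pos hq0 _
    have hpos2 : (0:ℝ) < (n:ℝ) ^ A := pow_pos hn0 _
    rw [Real.norm_eq_abs, abs_div, abs_of_pos (mul_pos hpos1 hpos2), abs_mul, abs_mul,
      abs_of_pos (zpow_pos hq0 _), abs_of_pos (pow_pos hn0 _)]
    rw [div_le_iff₀ (mul_pos hpos1 hpos2)]
    have h1 : |s| * q ^ (B1 * n) * (n:ℝ) ^ A1 = |s| * (r ^ n * q ^ (B * n)) * (n:ℝ) ^ A1 := by
      rw [← hz]; field_simp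
    rw [h1]
    have h2 : (1:ℝ) ≤ (n:ℝ) ^ A := one_le_pow₀ hn1
    calc |s| * (r ^ n * q ^ (B * n)) * (n:ℝ) ^ A1
        = (|s| * ((n:ℝ) ^ A1 * r ^ n)) * (q ^ (B * n) * 1) := by ring
      _ ≤ (|s| * ((n:ℝ) ^ A1 * r ^ n)) * (q ^ (B * n) * (n:ℝ) ^ A) := by
          apply mul_le_mul_of_nonneg_left
          · exact mul_le_mul_of_nonneg_left (by simpa using h2) hpos1.le
          · positivity
  · -- B1 = B, A1 < A
    have hlim : Tendsto (fun n : ℕ => |s| * (1 / (n:ℝ))) atTop (nhds 0) := by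
      simpa using (tendsto_one_div_atTop_nhds_zero_nat).const_mul |s|
    refine squeeze_zero_norm' ?_ hlim
    filter_upwards [eventually_ge_atTop 1] with n hn
    have hn1 : (1:ℝ) ≤ (n:ℝ) := by exact_mod_cast hn
    have hn0 : (0:ℝ) < (n:ℝ) := lt_of_lt_of_le one_pos hn1
    have hpos1 : (0:ℝ) < q ^ (B1 * n) := zpow_pos hq0 _
    have hpos2 : (0:ℝ) < (n:ℝ) ^ A := pow_pos hn0 _
    rw [Real.norm_eq_abs, abs_div, abs_of_pos (mul_pos hpos1 hpos2), abs_mul, abs_mul,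
      abs_of_pos (zpow_pos hq0 _), abs_of_pos (pow_pos hn0 _)]
    rw [div_le_iff₀ (mul_pos hpos1 hpos2)]
    have hkey : (n:ℝ) ^ A1 * (n:ℝ) ≤ (n:ℝ) ^ A := by
      calc (n:ℝ) ^ A1 * (n:ℝ) = (n:ℝ) ^ (A1 + 1) := by rw [pow_succ]
        _ ≤ (n:ℝ) ^ A := pow_le_pow_right₀ hn1 (by omega)
    have hstep : |s| * q ^ (B1 * n) * ((n:ℝ) ^ A1 * (n:ℝ)) ≤ |s| * q ^ (B1 * n) * (n:ℝ) ^ A :=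
      mul_le_mul_of_nonneg_left hkey (mul_nonneg (abs_nonneg s) hpos1.le)
    have he1 : |s| * q ^ (B1 * n) * (n:ℝ) ^ A1
        = |s| * q ^ (B1 * n) * ((n:ℝ) ^ A1 * (n:ℝ)) * (1/(n:ℝ)) := by
      field_simp
    have he2 : |s| * (1/(n:ℝ)) * (q ^ (B1 * n) * (n:ℝ) ^ A)
        = |s| * q ^ (B1 * n) * (n:ℝ) ^ A * (1/(n:ℝ)) := by ring
    rw [he1, he2]
    exact mul_le_mul_of_nonneg_right hstep (by positivity)

lemma oneDimP {q : ℝ} (hq : 1 < q) (P : Finset (ℤ × ℕ)) (S : ℤ × ℕ → ℝ)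
    (h0 : Tendsto (fun n : ℕ => ∑ p ∈ P, S p * q ^ (p.1 * n) * (n : ℝ) ^ p.2)
      atTop (nhds 0)) :
    ∀ p ∈ P, 0 ≤ p.1 → S p = 0 := by
  classical
  by_contra hcon
  push_neg at hcon
  obtain ⟨p₀, hp₀P, hp₀1, hp₀S⟩ := hcon
  have hq0 : (0:ℝ) < q := lt_trans one_pos hq
  set Q := P.filter (fun p => 0 ≤ p.1 ∧ S p ≠ 0) with hQdef
  have hQne : Q.Nonempty := ⟨p₀, by simp [hQdef, hp₀P, hp₀1, hp₀S]⟩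
  have hQ1ne : (Q.image Prod.fst).Nonempty := hQne.image _
  set B := (Q.image Prod.fst).max' hQ1ne with hBdef
  set Q1 := Q.filter (fun p => p.1 = B) with hQ1def
  have hQ1ne' : Q1.Nonempty := by
    obtain ⟨p', hp', hBB⟩ := Finset.mem_image.mp ((Q.image Prod.fst).max'_mem hQ1ne)
    exact ⟨p', by simp [hQ1def, hp', hBB, hBdef]⟩
  have hQ2ne : (Q1.image Prod.snd).Nonempty := hQ1ne'.image _
  set A := (Q1.image Prod.snd).max' hQ2ne with hAdef
  -- (B, A) ∈ Q
  have hBA : (B, A) ∈ Q := by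
    obtain ⟨p', hp', hAA⟩ := Finset.mem_image.mp ((Q1.image Prod.snd).max'_mem hQ2ne)
    have hB' : p'.1 = B := (Finset.mem_filter.mp hp').2
    have : p' = (B, A) := Prod.ext hB' hAA
    exact this ▸ (Finset.mem_filter.mp hp').1
  have hBAQ := Finset.mem_filter.mp hBA
  have hBAP : (B, A) ∈ P := hBAQ.1
  have hB0 : 0 ≤ B := hBAQ.2.1
  have hS : S (B, A) ≠ 0 := hBAQ.2.2
  -- lex maximality
  have hmax : ∀ p ∈ Q, p.1 < B ∨ (p.1 = B ∧ p.2 ≤ A) := by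
    intro p hp
    have h1 : p.1 ≤ B := Finset.le_max' _ _ (Finset.mem_image_of_mem _ hp)
    rcases lt_or_eq_of_le h1 with h | h
    · exact Or.inl h
    · refine Or.inr ⟨h, ?_⟩
      have hp1 : p ∈ Q1 := Finset.mem_filter.mpr ⟨hp, h⟩
      exact Finset.le_max' _ _ (Finset.mem_image_of_mem _ hp1)
  set T : ℕ → ℝ := fun n => q ^ (B * n) * (n : ℝ) ^ A with hTdef
  -- limit of g/T as sum of ratios
  have hterm : ∀ p ∈ P,
      Tendsto (fun n : ℕ => S p * q ^ (p.1 * n) * (n:ℝ) ^ p.2 / T n) atTop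
        (nhds (if p = (B, A) then S (B, A) else 0)) := by
    intro p hp
    by_cases hpe : p = (B, A)
    · simp only [if_pos hpe]
      have hev : ∀ᶠ n : ℕ in atTop,
          S p * q ^ (p.1 * n) * (n:ℝ) ^ p.2 / T n = S (B, A) := by
        filter_upwards [eventually_ge_atTop 1] with n hn
        have hn0 : (0:ℝ) < (n:ℝ) := by exact_mod_cast hn
        have hT0 : T n ≠ 0 := (mul_pos (zpow_pos hq0 _) (pow_pos hn0 _)).ne'
        rw [hpe]
        simp only [hTdef]
        field_simp
      exact Tendsto.congr' (hev.mono fun n h => h.symm) tendsto_const_nhds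
    · simp only [if_neg hpe]
      by_cases hSp : S p = 0
      · simpa [hSp] using (tendsto_const_nhds : Tendsto (fun _ : ℕ => (0:ℝ)) atTop _)
      · have hlex : p.1 < B ∨ (p.1 = B ∧ p.2 < A) := by
          by_cases hge : 0 ≤ p.1
          · have hpQ : p ∈ Q := Finset.mem_filter.mpr ⟨hp, hge, hSp⟩
            rcases hmax p hpQ with h | ⟨h1, h2⟩
            · exact Or.inl h
            · refine Or.inr ⟨h1, lt_of_le_of_ne h2 ?_⟩
              intro h2e
              exact hpe (Prod.ext h1 h2e)
          · exact Or.inl (lt_of_lt_of_le (lt_of_not_ge hge) hB0)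
        exact keyRatio hq hlex (S p)
  have hsumlim : Tendsto (fun n : ℕ => ∑ p ∈ P, (S p * q ^ (p.1 * n) * (n:ℝ) ^ p.2 / T n))
      atTop (nhds (S (B, A))) := by
    have := tendsto_finset_sum P hterm
    have hsum_if : ∑ p ∈ P, (if p = (B, A) then S (B, A) else 0) = S (B, A) := by
      rw [Finset.sum_ite_eq' P (B, A) (fun _ => S (B, A))]
      simp [hBAP]
    rwa [hsum_if] at this
  -- but also g/T → 0
  have hzero : Tendsto (fun n : ℕ => ∑ p ∈ P, (S p * q ^ (p.1 * n) * (n:ℝ) ^ p.2 / T n))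
      atTop (nhds 0) := by
    have heq : ∀ n : ℕ, ∑ p ∈ P, (S p * q ^ (p.1 * n) * (n:ℝ) ^ p.2 / T n)
        = (∑ p ∈ P, S p * q ^ (p.1 * n) * (n:ℝ) ^ p.2) / T n := by
      intro n; rw [Finset.sum_div]
    refine squeeze_zero_norm' ?_ (by simpa using h0.abs)
    filter_upwards [eventually_ge_atTop 1] with n hn
    have hn1 : (1:ℝ) ≤ (n:ℝ) := by exact_mod_cast hn
    have hT1 : (1:ℝ) ≤ T n := by
      rw [hTdef]
      have h1 : (1:ℝ) ≤ q ^ (B * n) := one_le_zpow₀ hq.le (by positivity)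
      have h2 : (1:ℝ) ≤ (n:ℝ) ^ A := one_le_pow₀ hn1
      calc (1:ℝ) = 1 * 1 := by ring
        _ ≤ q ^ (B * (n:ℕ) : ℤ) * (n:ℝ) ^ A := mul_le_mul h1 h2 one_pos.le (by linarith)
    rw [heq, Real.norm_eq_abs, abs_div]
    have habsT : (1:ℝ) ≤ |T n| := by
      rw [abs_of_pos (lt_of_lt_of_le one_pos hT1)]; exact hT1
    exact div_le_self (abs_nonneg _) habsT
  exact hS (tendsto_nhds_unique hsumlim hzero)

lemma oneDim {q : ℝ} (hq : 1 < q) {ι : Type*} (s : Finset ι) (α : ι → ℕ) (β : ι → ℤ)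
    (C : ι → ℝ)
    (h0 : Tendsto (fun n : ℕ => ∑ i ∈ s, C i * q ^ (β i * n) * (n : ℝ) ^ α i)
      atTop (nhds 0))
    (A : ℕ) (B : ℤ) (hB : 0 ≤ B) :
    ∑ i ∈ s.filter (fun i => (β i, α i) = (B, A)), C i = 0 := by
  classical
  set P := s.image (fun i => (β i, α i)) with hP
  set S : ℤ × ℕ → ℝ := fun p => ∑ i ∈ s.filter (fun i => (β i, α i) = p), C i with hSdef
  have hrw : ∀ n : ℕ, ∑ p ∈ P, S p * q ^ (p.1 * n) * (n : ℝ) ^ p.2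
      = ∑ i ∈ s, C i * q ^ (β i * n) * (n : ℝ) ^ α i := by
    intro n
    rw [← Finset.sum_fiberwise_of_maps_to (g := fun i => (β i, α i)) (t := P)
      (fun i hi => Finset.mem_image_of_mem _ hi)
      (fun i => C i * q ^ (β i * n) * (n : ℝ) ^ α i)]
    refine Finset.sum_congr rfl fun p hp => ?_
    rw [hSdef]
    simp only
    rw [Finset.sum_mul, Finset.sum_mul]
    refine Finset.sum_congr rfl fun i hi => ?_
    have h := (Finset.mem_filter.mp hi).2
    have h1 : β i = p.1 := by rw [← h]
    have h2 : α i = p.2 := by rw [← h]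
    rw [h1, h2]
  by_cases hmem : (B, A) ∈ P
  · exact oneDimP hq P S (h0.congr fun n => (hrw n).symm) (B, A) hmem hB
  · have hempty : s.filter (fun i => (β i, α i) = (B, A)) = ∅ := by
      rw [Finset.filter_eq_empty_iff]
      intro i hi hcon
      exact hmem (hcon ▸ Finset.mem_image_of_mem _ hi)
    rw [hempty, Finset.sum_empty]

lemma oneDimZero {q : ℝ} (hq : 1 < q) {ι : Type*} (s : Finset ι) (α : ι → ℕ) (β : ι → ℤ)
    (C : ι → ℝ)
    (h0 : ∀ n : ℕ, ∑ i ∈ s, C i * q ^ (β i * n) * (n : ℝ) ^ α i = 0)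
    (A : ℕ) (B : ℤ) :
    ∑ i ∈ s.filter (fun i => (β i, α i) = (B, A)), C i = 0 := by
  classical
  have hq0 : (0:ℝ) < q := lt_trans one_pos hq
  by_cases hne : ∃ i ∈ s, (β i, α i) = (B, A)
  · obtain ⟨i₁, hi₁, hBA⟩ := hne
    set K : ℤ := ∑ i ∈ s, |β i| with hK
    have hKi : ∀ i ∈ s, 0 ≤ β i + K := by
      intro i hi
      have h1 : |β i| ≤ K := Finset.single_le_sum (fun j _ => abs_nonneg (β j)) hi
      have h2 : -|β i| ≤ β i := neg_abs_le (β i)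
      omega
    have h0' : ∀ n : ℕ, ∑ i ∈ s, C i * q ^ ((β i + K) * n) * (n : ℝ) ^ α i = 0 := by
      intro n
      have : ∑ i ∈ s, C i * q ^ ((β i + K) * n) * (n : ℝ) ^ α i
          = q ^ (K * n) * ∑ i ∈ s, C i * q ^ (β i * n) * (n : ℝ) ^ α i := by
        rw [Finset.mul_sum]
        refine Finset.sum_congr rfl fun i hi => ?_
        rw [show (β i + K) * (n:ℤ) = β i * n + K * n by ring, zpow_add₀ (ne_of_gt hq0)]
        ring
      rw [this, h0 n, mul_zero]
    have hres := oneDim hq s α (fun i => β i + K) C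
      (by rw [show (fun n : ℕ => ∑ i ∈ s, C i * q ^ ((β i + K) * n) * (n : ℝ) ^ α i)
            = fun _ => (0:ℝ) from funext h0']; exact tendsto_const_nhds)
      A (B + K)
      (by have := hKi i₁ hi₁; have : β i₁ = B := congrArg Prod.fst hBA; omega)
    rw [← hres]
    apply Finset.sum_congr _ (fun _ _ => rfl)
    apply Finset.filter_congr
    intro i hi
    constructor
    · rintro h
      have h1 : β i = B := congrArg Prod.fst h
      have h2 : α i = A := congrArg Prod.snd h
      simp [h1, h2]
    · rintro h
      have h1 : β i + K = B + K := congrArg Prod.fst h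
      have h2 : α i = A := congrArg Prod.snd h
      have : β i = B := by omega
      simp [this, h2]
  · have hempty : s.filter (fun i => (β i, α i) = (B, A)) = ∅ := by
      rw [Finset.filter_eq_empty_iff]
      intro i hi hcon
      exact hne ⟨i, hi, hcon⟩
    rw [hempty, Finset.sum_empty]

lemma multiInd {q : ℝ} (hq : 1 < q) :
    ∀ (m : ℕ) {ι : Type} (s : Finset ι) (a : ι → Fin m → ℕ) (b : ι → Fin m → ℤ) (c : ι → ℝ),
      Set.InjOn (fun i => (a i, b i)) s →
      (∀ x : Fin m → ℕ,
        ∑ i ∈ s, c i * q ^ (∑ j, b i j * (x j : ℤ)) * ∏ j, (x j : ℝ) ^ a i j = 0) →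
      ∀ i ∈ s, c i = 0 := by
  have hq0 : (0:ℝ) < q := lt_trans one_pos hq
  intro m
  induction m with
  | zero =>
    intro ι s a b c hinj h0 i hi
    have hs : s = {i} := by
      apply Finset.eq_singleton_iff_unique_mem.mpr
      exact ⟨hi, fun j hj => hinj hj hi (Subsingleton.elim _ _)⟩
    have := h0 (fun _ => 0)
    rw [hs] at this
    simpa using this
  | succ m ih =>
    intro ι s a b c hinj h0 i₀ hi₀
    classical
    set G := s.filter (fun i => ((b i 0 : ℤ), a i 0) = ((b i₀ 0 : ℤ), a i₀ 0)) with hG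
    have key : ∀ x' : Fin m → ℕ,
        ∑ i ∈ G, c i * q ^ (∑ j, b i j.succ * (x' j : ℤ)) * ∏ j, (x' j : ℝ) ^ a i j.succ
          = 0 := by
      intro x'
      have h00 : ∀ n : ℕ,
          ∑ i ∈ s, (c i * q ^ (∑ j, b i j.succ * (x' j : ℤ)) * ∏ j, (x' j : ℝ) ^ a i j.succ)
            * q ^ ((b i 0) * n) * (n : ℝ) ^ (a i 0) = 0 := by
        intro n
        rw [← h0 (Fin.cons n x')]
        refine Finset.sum_congr rfl fun i _ => ?_
        rw [Fin.sum_univ_succ, Fin.prod_univ_succ]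
        simp only [Fin.cons_zero, Fin.cons_succ]
        rw [zpow_add₀ (ne_of_gt hq0)]
        ring
      exact oneDimZero hq s (fun i => a i 0) (fun i => b i 0)
        (fun i => c i * q ^ (∑ j, b i j.succ * (x' j : ℤ)) * ∏ j, (x' j : ℝ) ^ a i j.succ)
        h00 (a i₀ 0) (b i₀ 0)
    have hinj' : Set.InjOn (fun i => ((fun j => a i j.succ : Fin m → ℕ),
        (fun j => b i j.succ : Fin m → ℤ))) G := by
      intro i hi i' hi' h
      simp only [Prod.mk.injEq] at h
      have hiG := Finset.mem_filter.mp hi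
      have hi'G := Finset.mem_filter.mp hi'
      have hb0 : b i 0 = b i' 0 := by
        have e1 := congrArg Prod.fst hiG.2
        have e2 := congrArg Prod.fst hi'G.2
        simp only at e1 e2
        rw [e1, e2]
      have ha0 : a i 0 = a i' 0 := by
        have e1 := congrArg Prod.snd hiG.2
        have e2 := congrArg Prod.snd hi'G.2
        simp only at e1 e2
        rw [e1, e2]
      apply hinj (Finset.mem_of_mem_filter i hi) (Finset.mem_of_mem_filter i' hi')
      simp only [Prod.mk.injEq]
      constructor
      · funext j
        refine Fin.cases ?_ ?_ j
        · exact ha0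
        · intro j'; exact congrFun h.1 j'
      · funext j
        refine Fin.cases ?_ ?_ j
        · exact hb0
        · intro j'; exact congrFun h.2 j'
    exact ih G (fun i j => a i j.succ) (fun i j => b i j.succ) c hinj' key i₀
      (Finset.mem_filter.mpr ⟨hi₀, rfl⟩)

/-- Multivariate summability: if `h(x) = ∑_i c_i q^{∑_j b_{ij} x_j} ∏_j x_j^{a_{ij}}`
is absolutely summable over `ℕ^m`, then `b_{ij} ≤ -1` for all `i, j`. -/
theorem multivariate_summable_implies_neg (q : ℝ) (hq : 1 < q) (m r : ℕ)
    (hm : 1 ≤ m) (hr : 1 ≤ r)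
    (c : Fin r → ℝ) (hc : ∀ i, c i ≠ 0)
    (a : Fin r → Fin m → ℕ) (b : Fin r → Fin m → ℤ)
    (hab : Function.Injective fun i => (a i, b i))
    (hsum : Summable fun x : Fin m → ℕ =>
      |∑ i, c i * q ^ (∑ j, b i j * (x j : ℤ)) * ∏ j, (x j : ℝ) ^ (a i j)|) :
    ∀ i j, b i j ≤ -1 := by
  classical
  intro i₀ j₀
  by_contra hcon
  push_neg at hcon
  have hB0 : 0 ≤ b i₀ j₀ := by omega
  have hq0 : (0:ℝ) < q := lt_trans one_pos hq
  set U : Finset (Fin m) := Finset.univ \ {j₀} with hU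
  set G : Finset (Fin r) := Finset.univ.filter
    (fun i => ((b i j₀ : ℤ), a i j₀) = ((b i₀ j₀ : ℤ), a i₀ j₀)) with hG
  set C : (Fin m → ℕ) → Fin r → ℝ := fun t i =>
    c i * q ^ (∑ j ∈ U, b i j * (t j : ℤ)) * ∏ j ∈ U, (t j : ℝ) ^ a i j with hC
  have hUne : ∀ j ∈ U, j ≠ j₀ := by
    intro j hj
    rw [hU, Finset.mem_sdiff, Finset.mem_singleton] at hj
    exact hj.2
  -- Step 1: find t with nonzero group coefficient
  have hex : ∃ t : Fin m → ℕ, ∑ i ∈ G, C t i ≠ 0 := by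
    by_contra hall
    push_neg at hall
    set a' : Fin r → Fin m → ℕ := fun i => Function.update (a i) j₀ 0 with ha'
    set b' : Fin r → Fin m → ℤ := fun i => Function.update (b i) j₀ 0 with hb'
    have hinj' : Set.InjOn (fun i => (a' i, b' i)) G := by
      intro i hi i' hi' h
      simp only [Prod.mk.injEq] at h
      have hiG := (Finset.mem_filter.mp hi).2
      have hi'G := (Finset.mem_filter.mp hi').2
      have hb0 : b i j₀ = b i' j₀ := by
        have e1 := congrArg Prod.fst hiG
        have e2 := congrArg Prod.fst hi'G
        simp only at e1 e2
        rw [e1, e2]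
      have ha0 : a i j₀ = a i' j₀ := by
        have e1 := congrArg Prod.snd hiG
        have e2 := congrArg Prod.snd hi'G
        simp only at e1 e2
        rw [e1, e2]
      apply hab
      simp only [Prod.mk.injEq]
      constructor
      · funext j
        by_cases hj : j = j₀
        · rw [hj]; exact ha0
        · have := congrFun h.1 j
          rw [ha'] at this
          simpa [Function.update_of_ne hj] using this
      · funext j
        by_cases hj : j = j₀
        · rw [hj]; exact hb0
        · have := congrFun h.2 j
          rw [hb'] at this
          simpa [Function.update_of_ne hj] using this
    have h0' : ∀ x : Fin m → ℕ,
        ∑ i ∈ G, c i * q ^ (∑ j, b' i j * (x j : ℤ)) * ∏ j, (x j : ℝ) ^ a' i j = 0 := by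
      intro x
      rw [← hall x]
      refine Finset.sum_congr rfl fun i _ => ?_
      have hsum_eq : (∑ j, b' i j * (x j : ℤ)) = ∑ j ∈ U, b i j * (x j : ℤ) := by
        rw [Finset.sum_eq_sum_sdiff_singleton_add (Finset.mem_univ j₀)
          (fun j => b' i j * (x j : ℤ))]
        have hbj : b' i j₀ = 0 := Function.update_self _ _ _
        rw [hbj, zero_mul, add_zero]
        refine Finset.sum_congr rfl fun j hj => ?_
        rw [hb']
        simp [Function.update_of_ne (hUne j hj)]
      have hprod_eq : (∏ j, (x j : ℝ) ^ a' i j) = ∏ j ∈ U, (x j : ℝ) ^ a i j := by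
        rw [Finset.prod_eq_prod_diff_singleton_mul (Finset.mem_univ j₀)
          (fun j => (x j : ℝ) ^ a' i j)]
        have haj : a' i j₀ = 0 := Function.update_self _ _ _
        rw [haj, pow_zero, mul_one]
        refine Finset.prod_congr rfl fun j hj => ?_
        rw [ha']
        simp [Function.update_of_ne (hUne j hj)]
      rw [hsum_eq, hprod_eq, hC]
    have := multiInd hq m G a' b' c hinj' h0' i₀ (Finset.mem_filter.mpr ⟨Finset.mem_univ _, rfl⟩)
    exact hc i₀ this
  obtain ⟨t, hDt⟩ := hex
  -- Step 2: slice along coordinate j₀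
  have hinj_n : Function.Injective (fun n : ℕ => Function.update t j₀ n) := by
    intro n n' h
    have := congrFun h j₀
    simpa [Function.update_self] using this
  have hsum' : Summable (fun n : ℕ =>
      |∑ i, c i * q ^ (∑ j, b i j * ((Function.update t j₀ n) j : ℤ)) *
        ∏ j, ((Function.update t j₀ n) j : ℝ) ^ a i j|) := hsum.comp_injective hinj_n
  have htend0 := hsum'.tendsto_atTop_zero
  have htendF : Tendsto (fun n : ℕ =>
      ∑ i, c i * q ^ (∑ j, b i j * ((Function.update t j₀ n) j : ℤ)) *
        ∏ j, ((Function.update t j₀ n) j : ℝ) ^ a i j) atTop (nhds 0) :=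
    squeeze_zero_norm (fun n => le_of_eq (Real.norm_eq_abs _)) htend0
  have hform : ∀ n : ℕ,
      (∑ i, c i * q ^ (∑ j, b i j * ((Function.update t j₀ n) j : ℤ)) *
        ∏ j, ((Function.update t j₀ n) j : ℝ) ^ a i j)
      = ∑ i, C t i * q ^ (b i j₀ * n) * (n : ℝ) ^ (a i j₀) := by
    intro n
    refine Finset.sum_congr rfl fun i _ => ?_
    have hsum_eq : (∑ j, b i j * ((Function.update t j₀ n) j : ℤ))
        = (∑ j ∈ U, b i j * (t j : ℤ)) + b i j₀ * n := by
      rw [Finset.sum_eq_sum_sdiff_singleton_add (Finset.mem_univ j₀)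
        (fun j => b i j * ((Function.update t j₀ n) j : ℤ))]
      rw [Function.update_self]
      congr 1
      refine Finset.sum_congr rfl fun j hj => ?_
      rw [Function.update_of_ne (hUne j hj)]
    have hprod_eq : (∏ j, ((Function.update t j₀ n) j : ℝ) ^ a i j)
        = (∏ j ∈ U, (t j : ℝ) ^ a i j) * (n : ℝ) ^ a i j₀ := by
      rw [Finset.prod_eq_prod_diff_singleton_mul (Finset.mem_univ j₀)
        (fun j => ((Function.update t j₀ n) j : ℝ) ^ a i j)]
      rw [Function.update_self]
      congr 1
      refine Finset.prod_congr rfl fun j hj => ?_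
      rw [Function.update_of_ne (hUne j hj)]
    rw [hsum_eq, hprod_eq, zpow_add₀ (ne_of_gt hq0), hC]
    ring
  have hone := oneDim hq Finset.univ (fun i => a i j₀) (fun i => b i j₀) (C t)
    (htendF.congr hform) (a i₀ j₀) (b i₀ j₀) hB0
  exact hDt hone
end

section
/- Let q > 1 be a real number and let a ∈ ℕ, b ∈ ℤ with b ≤ −1. Then the function g_q(a,b) := Σ_{x∈ℕ} x^a q^{bx} lies in the ring 𝔸_q = ℤ[q, q^{−1}, (1/(1 − q^{−i}))_{i≥1}] ⊆ ℝ. (E.g., for a = 0 it equals 1/(1 − q^{b}).) -/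
open Finset in
lemma aux_sum_mem_Aq (q : ℝ) (hq : 1 < q) (b : ℤ) (hb : b ≤ -1) :
    ∀ a : ℕ, (∑' x : ℕ, (x : ℝ) ^ a * (q ^ b) ^ x) ∈ Subring.closure
        ({q, q⁻¹} ∪ {y : ℝ | ∃ i : ℕ, 1 ≤ i ∧ y = (1 - q ^ (-(i : ℤ)))⁻¹}) := by
  set R := Subring.closure
      ({q, q⁻¹} ∪ {y : ℝ | ∃ i : ℕ, 1 ≤ i ∧ y = (1 - q ^ (-(i : ℤ)))⁻¹}) with hR
  have hq0 : (0:ℝ) < q := lt_trans one_pos hq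
  set r : ℝ := q ^ b with hrdef
  have hr0 : 0 < r := zpow_pos hq0 b
  have hr1 : r < 1 := zpow_lt_one_of_neg₀ hq (lt_of_le_of_lt hb (by norm_num))
  have hrnorm : ‖r‖ < 1 := by rw [Real.norm_eq_abs, abs_of_pos hr0]; exact hr1
  have hsum : ∀ k : ℕ, Summable (fun x : ℕ => (x : ℝ) ^ k * r ^ x) :=
    fun k => summable_pow_mul_geometric_of_norm_lt_one k hrnorm
  -- r ∈ R
  have hqinv : q⁻¹ ∈ R := Subring.subset_closure (Or.inl (by simp))
  have hrb : r = (q⁻¹) ^ ((-b).toNat) := by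
    rw [← zpow_natCast, Int.toNat_of_nonneg (by linarith), inv_zpow, ← zpow_neg, neg_neg]
  have hrmem : r ∈ R := hrb ▸ pow_mem hqinv _
  have hinvmem : (1 - r)⁻¹ ∈ R := by
    refine Subring.subset_closure (Or.inr ⟨(-b).toNat, ?_, ?_⟩)
    · omega
    · congr 2
      rw [hrdef]
      congr 1
      omega
  have h1r : (1 : ℝ) - r ≠ 0 := by linarith
  intro a
  induction a using Nat.strong_induction_on with
  | _ a ih =>
    -- recurrence
    have hshift : (∑' x : ℕ, (x:ℝ) ^ a * r ^ x)
        = (0:ℝ) ^ a + ∑' x : ℕ, ((x : ℝ) + 1) ^ a * r ^ (x + 1) := by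
      rw [Summable.tsum_eq_zero_add (hsum a)]
      push_cast
      ring_nf
    have hexpand : ∀ x : ℕ, ((x : ℝ) + 1) ^ a * r ^ (x + 1)
        = ∑ k ∈ range (a + 1), (a.choose k : ℝ) * r * ((x:ℝ) ^ k * r ^ x) := by
      intro x
      rw [add_pow, Finset.sum_mul]
      refine Finset.sum_congr rfl fun k hk => ?_
      rw [pow_succ]
      ring
    have hsum2 : (∑' x : ℕ, (x:ℝ) ^ a * r ^ x) = (0:ℝ) ^ a
        + ∑ k ∈ range (a + 1), (a.choose k : ℝ) * r * (∑' x : ℕ, (x:ℝ) ^ k * r ^ x) := by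
      rw [hshift]
      congr 1
      rw [tsum_congr hexpand]
      rw [Summable.tsum_finsetSum (fun k _ => ((hsum k).mul_left _))]
      exact Finset.sum_congr rfl fun k _ => ((hsum k).tsum_mul_left _)
    have hsolve : (∑' x : ℕ, (x:ℝ) ^ a * r ^ x) = (1 - r)⁻¹ * ((0:ℝ) ^ a
        + ∑ k ∈ range a, (a.choose k : ℝ) * r * (∑' x : ℕ, (x:ℝ) ^ k * r ^ x)) := by
      rw [Finset.sum_range_succ, Nat.choose_self] at hsum2
      rw [eq_inv_mul_iff_mul_eq₀ h1r]
      ring_nf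
      ring_nf at hsum2
      linarith [show (∑' x : ℕ, (x:ℝ) ^ a * r ^ x) = ∑' x : ℕ, r ^ x * (x:ℝ) ^ a from tsum_congr fun x => mul_comm _ _]
    rw [hsolve]
    refine mul_mem hinvmem (add_mem (pow_mem (zero_mem R) a) (sum_mem ?_))
    intro k hk
    exact mul_mem (mul_mem (natCast_mem R _) hrmem) (ih k (Finset.mem_range.mp hk))

/-- For `b ≤ -1`, the sum `∑_{x∈ℕ} x^a q^{bx}` exists and lies in the ring
`𝔸_q = ℤ[q, q⁻¹, (1/(1-q^{-i}))_{i≥1}]`. -/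
theorem sum_powexp_mem_Aq (q : ℝ) (hq : 1 < q) (a : ℕ) (b : ℤ) (hb : b ≤ -1) :
    ∃ S : ℝ, HasSum (fun x : ℕ => (x : ℝ) ^ a * q ^ (b * (x : ℤ))) S ∧
      S ∈ Subring.closure
        ({q, q⁻¹} ∪ {y : ℝ | ∃ i : ℕ, 1 ≤ i ∧ y = (1 - q ^ (-(i : ℤ)))⁻¹}) := by
  have hq0 : (0:ℝ) < q := lt_trans one_pos hq
  have hr0 : 0 < q ^ b := zpow_pos hq0 b
  have hr1 : q ^ b < 1 := zpow_lt_one_of_neg₀ hq (lt_of_le_of_lt hb (by norm_num))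
  have hrnorm : ‖q ^ b‖ < 1 := by rw [Real.norm_eq_abs, abs_of_pos hr0]; exact hr1
  have heq : (fun x : ℕ => (x : ℝ) ^ a * q ^ (b * (x : ℤ)))
      = fun x : ℕ => (x : ℝ) ^ a * (q ^ b) ^ x := by
    funext x
    rw [zpow_mul, zpow_natCast]
  refine ⟨∑' x : ℕ, (x : ℝ) ^ a * (q ^ b) ^ x, ?_, aux_sum_mem_Aq q hq b hb a⟩
  rw [heq]
  exact (summable_pow_mul_geometric_of_norm_lt_one a hrnorm).hasSum
end
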